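/- Let t_{n,k} denote the number of forests on n labeled vertices consisting of exactly k rooted trees (each tree has one marked root vertex). Then for all n ≥ 0, ∑_{k=0}^{n} t_{n,k} · x^k = x(x+n)^{n-1} as polynomials in x (with the convention that for n = 0 the sum equals 1). -/

import Mathlib

open Polynomial

/-- `rootedForests n k` is the number of rooted forests on `n` labeled vertices
consisting of exactly `k` rooted trees: an acyclic simple graph on `{1,...,n}`
together with a set of `k` roots, exactly one in each connected component. -/
noncomputable def rootedForests (n k : ℕ) : ℕ :=
  Nat.card {F : SimpleGraph (Fin n) × Finset (Fin n) //
    F.1.IsAcyclic ∧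
    (∀ c : F.1.ConnectedComponent, ∃! v, v ∈ F.2 ∧ F.1.connectedComponentMk v = c) ∧
    F.2.card = k}

namespace RF

variable {n : ℕ}

/-- iterate the parent function `m` times starting at an optional vertex. -/
def iterO (f : Fin n → Option (Fin n)) (m : ℕ) (o : Option (Fin n)) : Option (Fin n) :=
  (fun o => o.bind f)^[m] o

@[simp] lemma iterO_zero (f : Fin n → Option (Fin n)) (o) : iterO f 0 o = o := rfl

lemma iterO_succ (f : Fin n → Option (Fin n)) (m : ℕ) (o) :
    iterO f (m + 1) o = iterO f m (o.bind f) := by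
  simp [iterO, Function.iterate_succ_apply]

lemma iterO_succ' (f : Fin n → Option (Fin n)) (m : ℕ) (o) :
    iterO f (m + 1) o = (iterO f m o).bind f := by
  simp [iterO, Function.iterate_succ_apply']

@[simp] lemma iterO_none (f : Fin n → Option (Fin n)) (m : ℕ) :
    iterO f m none = none := by
  induction m with
  | zero => rfl
  | succ m ih => rw [iterO_succ]; simpa using ih

lemma iterO_add (f : Fin n → Option (Fin n)) (m₁ m₂ : ℕ) (o) :
    iterO f (m₁ + m₂) o = iterO f m₂ (iterO f m₁ o) := by
  simp [iterO, add_comm m₁ m₂, Function.iterate_add_apply]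

/-- The parent function is acyclic: iterating from any vertex eventually gives `none`. -/
def Acyclic (f : Fin n → Option (Fin n)) : Prop :=
  ∀ v, ∃ m, iterO f m (some v) = none

lemma iterO_eq_none_of_le (f : Fin n → Option (Fin n)) {m m' : ℕ} (h : m ≤ m')
    {o} (h0 : iterO f m o = none) : iterO f m' o = none := by
  obtain ⟨d, rfl⟩ := Nat.exists_eq_add_of_le h
  rw [iterO_add, h0, iterO_none]

/-- The height of a vertex: least `m` with `iterO f m (some v) = none`. -/
noncomputable def ht (f : Fin n → Option (Fin n)) (v : Fin n) : ℕ :=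
  sInf {m | iterO f m (some v) = none}

lemma ht_spec {f : Fin n → Option (Fin n)} (hf : Acyclic f) (v : Fin n) :
    iterO f (ht f v) (some v) = none :=
  Nat.sInf_mem (hf v)

lemma ht_min {f : Fin n → Option (Fin n)} {v : Fin n} {m : ℕ}
    (h : iterO f m (some v) = none) : ht f v ≤ m :=
  Nat.sInf_le h

lemma ht_pos {f : Fin n → Option (Fin n)} (hf : Acyclic f) (v : Fin n) : 0 < ht f v := by
  rcases Nat.eq_zero_or_pos (ht f v) with h | h
  · have := ht_spec hf v
    rw [h] at this
    simp at this
  · exact h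

lemma ht_eq_of_parent {f : Fin n → Option (Fin n)} (hf : Acyclic f) {v w : Fin n}
    (h : f v = some w) : ht f v = ht f w + 1 := by
  have key : ∀ m, iterO f (m + 1) (some v) = iterO f m (some w) := by
    intro m; rw [iterO_succ]; simp [h]
  apply le_antisymm
  · exact ht_min (by rw [key]; exact ht_spec hf w)
  · obtain ⟨m, hm⟩ := Nat.exists_eq_succ_of_ne_zero (ht_pos hf v).ne'
    have : iterO f m (some w) = none := by
      rw [← key, ← Nat.succ_eq_add_one, ← hm]; exact ht_spec hf v
    rw [hm]
    exact Nat.succ_le_succ (ht_min this)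

/-- The root above `v`: the last vertex on the iteration path from `v`. -/
noncomputable def rootOf (f : Fin n → Option (Fin n)) (v : Fin n) : Fin n :=
  (iterO f (ht f v - 1) (some v)).getD v

lemma iterO_pred_ht {f : Fin n → Option (Fin n)} (hf : Acyclic f) (v : Fin n) :
    iterO f (ht f v - 1) (some v) = some (rootOf f v) := by
  have hlt : ht f v - 1 < ht f v := Nat.sub_lt (ht_pos hf v) one_pos
  cases h : iterO f (ht f v - 1) (some v) with
  | none => exact absurd (ht_min h) (not_le.mpr hlt)
  | some r => simp [rootOf, h]

lemma root_parent_none {f : Fin n → Option (Fin n)} (hf : Acyclic f) (v : Fin n) :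
    f (rootOf f v) = none := by
  have h1 : iterO f (ht f v) (some v) = none := ht_spec hf v
  have h2 : ht f v = (ht f v - 1) + 1 := (Nat.succ_pred_eq_of_pos (ht_pos hf v)).symm
  rw [h2, iterO_succ', iterO_pred_ht hf v] at h1
  simpa using h1

lemma rootOf_parent {f : Fin n → Option (Fin n)} (hf : Acyclic f) {v w : Fin n}
    (h : f v = some w) : rootOf f v = rootOf f w := by
  have hht := ht_eq_of_parent hf h
  have key : iterO f (ht f v - 1) (some v) = iterO f (ht f w - 1) (some w) := by
    rcases Nat.eq_zero_or_pos (ht f w - 1) with h0 | h0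
    · rw [hht]
      simp only [Nat.add_sub_cancel]
      rw [h0]
      have hwpos := ht_pos hf w
      have : ht f w = 1 := by omega
      rw [this, iterO_succ]
      simp [h]
    · have h2 : ht f v - 1 = (ht f w - 1) + 1 := by omega
      rw [h2, iterO_succ]
      simp [h]
  have h2 := iterO_pred_ht hf v
  rw [key, iterO_pred_ht hf w] at h2
  exact (Option.some_injective _ h2).symm

lemma rootOf_of_none {f : Fin n → Option (Fin n)} (hf : Acyclic f) {v : Fin n}
    (h : f v = none) : rootOf f v = v := by
  have h1 : ht f v ≤ 1 := ht_min (by rw [iterO_succ]; simp [h])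
  have h2 : ht f v = 1 := le_antisymm h1 (ht_pos hf v)
  have := iterO_pred_ht hf v
  rw [h2] at this
  simpa [rootOf] using this.symm

/-- if the iteration from `p` reaches a root `v` at time `m`, then `m = ht f p - 1`
and `v = rootOf f p`. -/
lemma reach_root_unique {f : Fin n → Option (Fin n)} (hf : Acyclic f) {p v : Fin n} {m : ℕ}
    (h : iterO f m (some p) = some v) (hv : f v = none) :
    m = ht f p - 1 ∧ v = rootOf f p := by
  have h1 : iterO f (m + 1) (some p) = none := by
    rw [iterO_succ', h]; simpa using hv
  have h2 : ht f p ≤ m + 1 := ht_min h1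
  have h3 : m < ht f p := by
    by_contra hc
    push_neg at hc
    have := iterO_eq_none_of_le f hc (ht_spec hf p)
    rw [h] at this; simp at this
  have hm : m = ht f p - 1 := by omega
  refine ⟨hm, ?_⟩
  have := iterO_pred_ht hf p
  rw [← hm, h] at this
  exact Option.some_injective _ this

/-- Restriction of an acyclic function is acyclic. -/
lemma acyclic_of_le {f g : Fin n → Option (Fin n)} (hf : Acyclic f)
    (hg : ∀ v, g v = none ∨ g v = f v) : Acyclic g := by
  intro v
  suffices H : ∀ m v, ht f v = m → ∃ m', iterO g m' (some v) = none from H _ v rfl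
  intro m
  induction m using Nat.strong_induction_on with
  | _ m ih =>
    intro v hn
    rcases hg v with h | h
    · exact ⟨1, by rw [iterO_succ]; simp [h]⟩
    · cases hfv : f v with
      | none => exact ⟨1, by rw [iterO_succ]; simp [h, hfv]⟩
      | some w =>
        rw [hfv] at h
        obtain ⟨m', hm⟩ := ih (ht f w) (by rw [← hn, ht_eq_of_parent hf hfv]; omega) w rfl
        exact ⟨m' + 1, by rw [iterO_succ]; simpa [h] using hm⟩

lemma iterO_update_eq {f : Fin n → Option (Fin n)} {v : Fin n} (o : Option (Fin n))
    {m : ℕ} : ∀ {q : Fin n}, (∀ m' < m, iterO f m' (some q) ≠ some v) →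
    iterO (Function.update f v o) m (some q) = iterO f m (some q) := by
  induction m with
  | zero => intro q _; rfl
  | succ m ih =>
    intro q hm
    have hq : q ≠ v := by
      intro h; exact hm 0 (Nat.succ_pos m) (by simp [h])
    rw [iterO_succ, iterO_succ]
    simp only [Option.bind_some, Function.update_of_ne hq]
    cases hfq : f q with
    | none => simp
    | some w =>
      exact ih (fun m' hm' h => hm (m' + 1) (by omega) (by rw [iterO_succ]; simpa [hfq] using h))

/-- Extension lemma, positive direction. -/
lemma acyclic_update {f : Fin n → Option (Fin n)} (hf : Acyclic f) {v p : Fin n}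
    (hv : f v = none) (hr : rootOf f p ≠ v) :
    Acyclic (Function.update f v (some p)) := by
  set f' := Function.update f v (some p) with hf'
  have hpath : ∀ m, iterO f m (some p) ≠ some v := by
    intro m h
    exact hr ((reach_root_unique hf h hv).2.symm)
  have hvcase : ∃ m, iterO f' m (some v) = none := by
    refine ⟨1 + ht f p, ?_⟩
    rw [iterO_add]
    have h1 : iterO f' 1 (some v) = some p := by
      rw [iterO_succ]; simp [hf', Function.update_self]
    rw [h1, iterO_update_eq (some p) (fun m' _ => hpath m')]
    exact ht_spec hf p
  intro u
  suffices H : ∀ m u, ht f u = m → ∃ m', iterO f' m' (some u) = none from H _ u rfl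
  intro m
  induction m using Nat.strong_induction_on with
  | _ m ih =>
    intro u hn
    by_cases huv : u = v
    · subst huv; exact hvcase
    · cases hfu : f u with
      | none => exact ⟨1, by rw [iterO_succ]; simp [hf', Function.update_of_ne huv, hfu]⟩
      | some w =>
        obtain ⟨m', hm⟩ := ih (ht f w) (by rw [← hn, ht_eq_of_parent hf hfu]; omega) w rfl
        refine ⟨m' + 1, ?_⟩
        rw [iterO_succ]
        simp only [Option.bind_some, hf', Function.update_of_ne huv, hfu]
        exact hm

/-- Extension lemma, negative direction. -/
lemma not_acyclic_update {f : Fin n → Option (Fin n)} (hf : Acyclic f) {v p : Fin n}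
    (hv : f v = none) (hr : rootOf f p = v) :
    ¬ Acyclic (Function.update f v (some p)) := by
  set f' := Function.update f v (some p) with hf'
  set L := ht f p with hL
  have hpath : ∀ m' < L - 1, iterO f m' (some p) ≠ some v := by
    intro m' hm' h
    have := (reach_root_unique hf h hv).1
    omega
  have h1 : iterO f' (L - 1) (some p) = some v := by
    rw [iterO_update_eq (some p) hpath, ← hr]
    exact iterO_pred_ht hf p
  have hcyc : iterO f' L (some v) = some v := by
    have : (1 : ℕ) + (L - 1) = L := by
      have := ht_pos hf p; omega
    rw [← this, iterO_add]
    have h2 : iterO f' 1 (some v) = some p := by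
      rw [iterO_succ]; simp [hf', Function.update_self]
    rw [h2, h1]
  have hrep : ∀ q : ℕ, iterO f' (q * L) (some v) = some v := by
    intro q
    induction q with
    | zero => simp
    | succ q ih => rw [Nat.succ_mul, iterO_add, ih, hcyc]
  intro hacy
  obtain ⟨m, hm⟩ := hacy v
  have hLpos : 0 < L := ht_pos hf p
  have : iterO f' (m * L) (some v) = none :=
    iterO_eq_none_of_le _ (Nat.le_mul_of_pos_right m hLpos) hm
  rw [hrep m] at this
  simp at this


/-! ### Section 2: graphs -/

open SimpleGraph

/-- The forest graph of a parent function. -/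
def graphOf (f : Fin n → Option (Fin n)) : SimpleGraph (Fin n) :=
  SimpleGraph.fromRel (fun a b => f a = some b)

lemma graphOf_adj {f : Fin n → Option (Fin n)} {a b : Fin n} :
    (graphOf f).Adj a b ↔ a ≠ b ∧ (f a = some b ∨ f b = some a) := by
  simp [graphOf, SimpleGraph.fromRel_adj]

lemma no_return {f : Fin n → Option (Fin n)} (hf : Acyclic f) {m : ℕ} {v : Fin n}
    (h : iterO f m (some v) = some v) : m = 0 := by
  by_contra hm
  have hrep : ∀ q : ℕ, iterO f (q * m) (some v) = some v := by
    intro q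
    induction q with
    | zero => simp
    | succ q ih => rw [Nat.succ_mul, iterO_add, ih, h]
  obtain ⟨m', hm'⟩ := hf v
  have : iterO f (m' * m) (some v) = none :=
    iterO_eq_none_of_le _ (Nat.le_mul_of_pos_right m' (Nat.pos_of_ne_zero hm)) hm'
  rw [hrep m'] at this
  simp at this

lemma f_ne_self {f : Fin n → Option (Fin n)} (hf : Acyclic f) (v : Fin n) :
    f v ≠ some v := by
  intro h
  have : iterO f 1 (some v) = some v := by rw [iterO_succ]; simpa using h
  simpa using no_return hf this

lemma no_two_cycle {f : Fin n → Option (Fin n)} (hf : Acyclic f) {v w : Fin n}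
    (h : f v = some w) : f w ≠ some v := by
  intro h'
  have : iterO f 2 (some v) = some v := by
    rw [show (2:ℕ) = 1 + 1 from rfl, iterO_add, iterO_succ, iterO_succ]
    simp [h, h']
  simpa using no_return hf this

lemma no_path_back {f : Fin n → Option (Fin n)} (hf : Acyclic f) {v w : Fin n}
    (h : f v = some w) {m : ℕ} : iterO f m (some w) ≠ some v := by
  intro h'
  have : iterO f (1 + m) (some v) = some v := by
    rw [iterO_add, iterO_succ]
    simpa [h] using h'
  simpa using no_return hf this

lemma adj_of_parent {f : Fin n → Option (Fin n)} (hf : Acyclic f) {v w : Fin n}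
    (h : f v = some w) : (graphOf f).Adj v w := by
  rw [graphOf_adj]
  refine ⟨fun hvw => f_ne_self hf v (hvw ▸ h), Or.inl h⟩

lemma reach_rootOf {f : Fin n → Option (Fin n)} (hf : Acyclic f) (v : Fin n) :
    (graphOf f).Reachable v (rootOf f v) := by
  suffices H : ∀ m v, ht f v = m → (graphOf f).Reachable v (rootOf f v) from H _ v rfl
  intro m
  induction m using Nat.strong_induction_on with
  | _ m ih =>
    intro v hn
    cases hfv : f v with
    | none => rw [rootOf_of_none hf hfv]
    | some w =>
      have h1 : rootOf f v = rootOf f w := rootOf_parent hf hfv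
      have h2 := ih (ht f w) (by rw [← hn, ht_eq_of_parent hf hfv]; omega) w rfl
      rw [h1]
      exact (adj_of_parent hf hfv).reachable.trans h2

lemma rootOf_eq_of_adj {f : Fin n → Option (Fin n)} (hf : Acyclic f) {a b : Fin n}
    (h : (graphOf f).Adj a b) : rootOf f a = rootOf f b := by
  rw [graphOf_adj] at h
  rcases h.2 with h' | h'
  · exact rootOf_parent hf h'
  · exact (rootOf_parent hf h').symm

lemma rootOf_eq_of_reachable {f : Fin n → Option (Fin n)} (hf : Acyclic f) {a b : Fin n}
    (h : (graphOf f).Reachable a b) : rootOf f a = rootOf f b := by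
  obtain ⟨p⟩ := h
  induction p with
  | nil => rfl
  | cons hadj p ih => rw [rootOf_eq_of_adj hf hadj, ih]

lemma graphOf_update_none {f : Fin n → Option (Fin n)} (hf : Acyclic f) {v w : Fin n}
    (hvw : f v = some w) :
    graphOf (Function.update f v none)
      = graphOf f \ SimpleGraph.fromEdgeSet {s(v, w)} := by
  ext a b
  rw [SimpleGraph.sdiff_adj, graphOf_adj, graphOf_adj, SimpleGraph.fromEdgeSet_adj]
  constructor
  · rintro ⟨hab, h⟩
    have hgf : ∀ c d : Fin n, Function.update f v none c = some d → f c = some d ∧ c ≠ v := by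
      intro c d hc
      by_cases hcv : c = v
      · rw [hcv, Function.update_self] at hc; exact absurd hc (by simp)
      · rw [Function.update_of_ne hcv] at hc; exact ⟨hc, hcv⟩
    constructor
    · refine ⟨hab, ?_⟩
      rcases h with h | h
      · exact Or.inl (hgf a b h).1
      · exact Or.inr (hgf b a h).1
    · rintro ⟨he, -⟩
      rw [Set.mem_singleton_iff, Sym2.eq_iff] at he
      rcases h with h | h
      · obtain ⟨hc, hcv⟩ := hgf a b h
        rcases he with ⟨rfl, rfl⟩ | ⟨rfl, rfl⟩
        · exact hcv rfl
        · exact no_two_cycle hf hvw hc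
      · obtain ⟨hc, hcv⟩ := hgf b a h
        rcases he with ⟨rfl, rfl⟩ | ⟨rfl, rfl⟩
        · exact no_two_cycle hf hvw hc
        · exact hcv rfl
  · rintro ⟨⟨hab, h⟩, hne⟩
    refine ⟨hab, ?_⟩
    have hs : ¬(s(a, b) = s(v, w)) := fun hh => hne ⟨by rw [Set.mem_singleton_iff]; exact hh, hab⟩
    rw [Sym2.eq_iff] at hs
    push_neg at hs
    rcases h with h | h
    · left
      have hav : a ≠ v := by
        intro ha
        rw [ha, hvw] at h
        exact hs.1 ha (Option.some_injective _ h).symm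
      rw [Function.update_of_ne hav]; exact h
    · right
      have hbv : b ≠ v := by
        intro hb
        rw [hb, hvw] at h
        exact hs.2 (Option.some_injective _ h).symm hb
      rw [Function.update_of_ne hbv]; exact h

lemma graphOf_acyclic {f : Fin n → Option (Fin n)} (hf : Acyclic f) :
    (graphOf f).IsAcyclic := by
  rw [SimpleGraph.isAcyclic_iff_forall_adj_isBridge]
  intro a b hab
  have key : ∀ v w : Fin n, f v = some w → (graphOf f).IsBridge s(v, w) := by
    intro v w hvw
    rw [SimpleGraph.isBridge_iff]
    show ¬ (graphOf f \ SimpleGraph.fromEdgeSet {s(v, w)}).Reachable v w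
    rw [← graphOf_update_none hf hvw]
    intro hreach
    set g := Function.update f v none with hg
    have hgacy : Acyclic g := by
      refine acyclic_of_le hf ?_
      intro u
      by_cases huv : u = v
      · left; rw [huv, hg, Function.update_self]
      · right; rw [hg, Function.update_of_ne huv]
    have h1 : rootOf g v = v := rootOf_of_none hgacy (by rw [hg, Function.update_self])
    have h2 : rootOf g w = rootOf f w := by
      -- iterates of g from w coincide with iterates of f from w
      have hpath : ∀ m : ℕ, iterO f m (some w) ≠ some v := fun m => no_path_back hf hvw
      have heq : ∀ m, iterO g m (some w) = iterO f m (some w) := by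
        intro m
        rw [hg]
        exact iterO_update_eq none (fun m' _ => hpath m')
      have h3 : iterO g (ht f w) (some w) = none := by rw [heq]; exact ht_spec hf w
      have h4 : ht g w = ht f w := by
        apply le_antisymm (ht_min h3)
        apply ht_min
        rw [← heq]
        exact ht_spec hgacy w
      have h5 := iterO_pred_ht hgacy w
      rw [h4, heq] at h5
      have h6 := iterO_pred_ht hf w
      rw [h5] at h6
      exact Option.some_injective _ h6
    have h7 : rootOf g v = rootOf g w := rootOf_eq_of_reachable hgacy hreach
    rw [h1, h2] at h7
    have h8 : f (rootOf f w) = none := root_parent_none hf w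
    rw [← h7, hvw] at h8
    simp at h8
  rw [graphOf_adj] at hab
  rcases hab.2 with h | h
  · exact key a b h
  · rw [Sym2.eq_swap]
    exact key b a h

lemma exists_unique_root {f : Fin n → Option (Fin n)} (hf : Acyclic f)
    (c : (graphOf f).ConnectedComponent) :
    ∃! v, f v = none ∧ (graphOf f).connectedComponentMk v = c := by
  obtain ⟨u, rfl⟩ := c.exists_rep
  refine ⟨rootOf f u, ⟨root_parent_none hf u, ?_⟩, ?_⟩
  · exact SimpleGraph.ConnectedComponent.sound (reach_rootOf hf u).symm
  · rintro v ⟨hv, hc⟩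
    have hreach : (graphOf f).Reachable v u := SimpleGraph.ConnectedComponent.exact hc
    have := rootOf_eq_of_reachable hf hreach
    rw [rootOf_of_none hf hv] at this
    exact this

lemma length_eq_dist_of_isPath {V : Type*} [DecidableEq V] {G : SimpleGraph V} (hG : G.IsAcyclic)
    {a b : V} {p : G.Walk a b} (hp : p.IsPath) : p.length = G.dist a b := by
  apply le_antisymm _ (SimpleGraph.dist_le p)
  obtain ⟨W, hW⟩ := (SimpleGraph.Walk.reachable p).exists_walk_length_eq_dist
  have huniq := hG.path_unique ⟨W.bypass, SimpleGraph.Walk.bypass_isPath W⟩ ⟨p, hp⟩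
  have hlen : W.bypass.length = p.length :=
    congrArg (fun q : G.Path a b => (q : G.Walk a b).length) huniq
  calc p.length = W.bypass.length := hlen.symm
    _ ≤ W.length := SimpleGraph.Walk.length_bypass_le W
    _ = G.dist a b := hW

lemma exists_fwalk {f : Fin n → Option (Fin n)} (hf : Acyclic f) (v : Fin n) :
    ∃ p : (graphOf f).Walk v (rootOf f v), p.IsPath ∧ p.length + 1 = ht f v ∧
      ∀ u ∈ p.support, ∃ m, iterO f m (some v) = some u := by
  suffices H : ∀ m v, ht f v = m → ∃ p : (graphOf f).Walk v (rootOf f v), p.IsPath ∧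
      p.length + 1 = ht f v ∧ ∀ u ∈ p.support, ∃ m, iterO f m (some v) = some u from
    H _ v rfl
  intro m
  induction m using Nat.strong_induction_on with
  | _ m ih =>
    intro v hn
    cases hfv : f v with
    | none =>
      rw [rootOf_of_none hf hfv]
      refine ⟨SimpleGraph.Walk.nil, SimpleGraph.Walk.IsPath.nil, ?_, ?_⟩
      · have h1 : ht f v ≤ 1 := ht_min (by rw [iterO_succ]; simp [hfv])
        have h2 := ht_pos hf v
        simp only [SimpleGraph.Walk.length_nil]
        omega
      · intro u hu
        simp only [SimpleGraph.Walk.support_nil, List.mem_singleton] at hu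
        exact ⟨0, by simp [hu]⟩
    | some w =>
      obtain ⟨q, hq, hlen, hsup⟩ :=
        ih (ht f w) (by rw [← hn, ht_eq_of_parent hf hfv]; omega) w rfl
      rw [rootOf_parent hf hfv]
      refine ⟨SimpleGraph.Walk.cons (adj_of_parent hf hfv) q, ?_, ?_, ?_⟩
      · rw [SimpleGraph.Walk.cons_isPath_iff]
        refine ⟨hq, fun hv => ?_⟩
        obtain ⟨m', hm'⟩ := hsup v hv
        exact no_path_back hf hfv hm'
      · rw [SimpleGraph.Walk.length_cons, ht_eq_of_parent hf hfv]
        omega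
      · intro u hu
        rw [SimpleGraph.Walk.support_cons, List.mem_cons] at hu
        rcases hu with rfl | hu
        · exact ⟨0, rfl⟩
        · obtain ⟨m', hm'⟩ := hsup u hu
          exact ⟨m' + 1, by rw [Nat.add_comm, iterO_add, iterO_succ]; simpa [hfv] using hm'⟩

lemma dist_rootOf {f : Fin n → Option (Fin n)} (hf : Acyclic f) (v : Fin n) :
    (graphOf f).dist v (rootOf f v) + 1 = ht f v := by
  obtain ⟨p, hp, hlen, -⟩ := exists_fwalk hf v
  rw [← length_eq_dist_of_isPath (graphOf_acyclic hf) hp]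
  exact hlen

/-- Injectivity: a rooted forest graph determines the parent function. -/
lemma parentFn_unique {f f' : Fin n → Option (Fin n)} (hf : Acyclic f) (hf' : Acyclic f')
    (hG : graphOf f = graphOf f') (hR : ∀ v, f v = none ↔ f' v = none) : f = f' := by
  funext v
  cases hfv : f v with
  | none => rw [(hR v).mp hfv]
  | some w =>
    cases hfv' : f' v with
    | none => exact absurd ((hR v).mpr hfv') (by rw [hfv]; simp)
    | some w' =>
      by_cases hww : w = w'
      · rw [hww]
      exfalso
      -- roots agree
      set r := rootOf f v with hr
      have hroot_r : f r = none := root_parent_none hf v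
      have hroot_r' : f' r = none := (hR r).mp hroot_r
      have hreach : (graphOf f).Reachable v r := reach_rootOf hf v
      have hreach' : (graphOf f').Reachable v r := hG ▸ hreach
      have hr' : rootOf f' v = r := by
        have h1 := rootOf_eq_of_reachable hf' hreach'
        rw [rootOf_of_none hf' hroot_r'] at h1
        exact h1
      -- in graphOf f, v is adjacent to w'; since f v = some w ≠ some w', f w' = some v
      have hadj' : (graphOf f).Adj v w' := by
        rw [hG]
        exact adj_of_parent hf' hfv'
      rw [graphOf_adj] at hadj'
      have hwv : f w' = some v := by
        rcases hadj'.2 with h | h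
        · rw [hfv] at h; exact absurd (Option.some_injective _ h) hww
        · exact h
      -- distances
      have e1 : (graphOf f).dist v r + 1 = ht f v := dist_rootOf hf v
      have e2 : (graphOf f).dist w' (rootOf f w') + 1 = ht f w' := dist_rootOf hf w'
      have e2' : rootOf f w' = r := by rw [rootOf_parent hf hwv]
      have e3 : ht f w' = ht f v + 1 := ht_eq_of_parent hf hwv
      have e4 : (graphOf f').dist v (rootOf f' v) + 1 = ht f' v := dist_rootOf hf' v
      have e5 : (graphOf f').dist w' (rootOf f' w') + 1 = ht f' w' := dist_rootOf hf' w'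
      have e5' : rootOf f' w' = r := by rw [← rootOf_parent hf' hfv', hr']
      have e6 : ht f' v = ht f' w' + 1 := ht_eq_of_parent hf' hfv'
      rw [e2'] at e2
      rw [e5', ← hG] at e5
      rw [hr', ← hG] at e4
      omega

/-- Surjectivity: every rooted forest graph comes from a parent function. -/
lemma exists_parentFn {G : SimpleGraph (Fin n)} {R : Finset (Fin n)}
    (hGa : G.IsAcyclic)
    (hGr : ∀ c : G.ConnectedComponent, ∃! v, v ∈ R ∧ G.connectedComponentMk v = c) :
    ∃ f : Fin n → Option (Fin n), Acyclic f ∧ graphOf f = G ∧ ∀ v, (f v = none ↔ v ∈ R) := by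
  classical
  choose rt hrtR hrtc using fun c => (hGr c).exists
  have hrt_uniq : ∀ (c) (v), v ∈ R → G.connectedComponentMk v = c → v = rt c := by
    intro c v hv hc
    exact (hGr c).unique ⟨hv, hc⟩ ⟨hrtR c, hrtc c⟩
  set rtv : Fin n → Fin n := fun v => rt (G.connectedComponentMk v) with hrtv
  have hrtv_mk : ∀ v, G.connectedComponentMk (rtv v) = G.connectedComponentMk v := by
    intro v; exact hrtc _
  have hreach : ∀ v, G.Reachable v (rtv v) := by
    intro v
    exact (SimpleGraph.ConnectedComponent.exact (hrtv_mk v)).symm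
  have hpar : ∀ v, v ≠ rtv v →
      ∃ w, G.Adj v w ∧ ∃ q : G.Walk w (rtv v), q.IsPath ∧ v ∉ q.support := by
    intro v hv
    obtain ⟨p0⟩ := hreach v
    obtain ⟨w, hw, p', hp'⟩ := SimpleGraph.Walk.exists_eq_cons_of_ne hv p0.toPath.1
    have hpath : (SimpleGraph.Walk.cons hw p').IsPath := hp' ▸ p0.toPath.2
    rw [SimpleGraph.Walk.cons_isPath_iff] at hpath
    exact ⟨w, hw, p', hpath.1, hpath.2⟩
  set f : Fin n → Option (Fin n) :=
    fun v => if h : v = rtv v then none else some (hpar v h).choose with hfdef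
  have hf_none : ∀ v, v = rtv v → f v = none := by
    intro v h
    show (if h : v = rtv v then none else some (hpar v h).choose) = none
    rw [dif_pos h]
  have hf_some : ∀ v (h : v ≠ rtv v), f v = some (hpar v h).choose := by
    intro v h
    show (if h : v = rtv v then none else some (hpar v h).choose) = _
    rw [dif_neg h]
  -- v ↦ the second vertex of any path from v to its root
  have hsnd : ∀ (a r' : Fin n), rtv a = r' → ∀ (p : G.Walk a r'), p.IsPath → a ≠ rtv a →
      f a = some (p.getVert 1) := by
    intro a r' heq p hp ha
    subst heq
    obtain ⟨hadj, q, hq, hnot⟩ := (hpar a ha).choose_spec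
    have hP : (SimpleGraph.Walk.cons hadj q).IsPath := by
      rw [SimpleGraph.Walk.cons_isPath_iff]; exact ⟨hq, hnot⟩
    have huniq := hGa.path_unique ⟨p, hp⟩ ⟨SimpleGraph.Walk.cons hadj q, hP⟩
    have hval : p = SimpleGraph.Walk.cons hadj q := congrArg Subtype.val huniq
    rw [hf_some a ha, hval]
    rw [SimpleGraph.Walk.getVert_cons_succ, SimpleGraph.Walk.getVert_zero]
  -- the step decreases the distance to the root
  have hstep : ∀ v (h : v ≠ rtv v), G.Adj v ((hpar v h).choose) ∧
      rtv ((hpar v h).choose) = rtv v ∧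
      G.dist ((hpar v h).choose) (rtv ((hpar v h).choose)) < G.dist v (rtv v) := by
    intro v h
    obtain ⟨hadj, q, hq, hnot⟩ := (hpar v h).choose_spec
    have hmk : G.connectedComponentMk ((hpar v h).choose) = G.connectedComponentMk v :=
      (SimpleGraph.ConnectedComponent.connectedComponentMk_eq_of_adj hadj).symm
    have hrtw : rtv ((hpar v h).choose) = rtv v := congrArg rt hmk
    refine ⟨hadj, hrtw, ?_⟩
    have hP : (SimpleGraph.Walk.cons hadj q).IsPath := by
      rw [SimpleGraph.Walk.cons_isPath_iff]; exact ⟨hq, hnot⟩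
    have h1 : G.dist v (rtv v) = q.length + 1 := by
      rw [← length_eq_dist_of_isPath hGa hP, SimpleGraph.Walk.length_cons]
    have h2 : G.dist ((hpar v h).choose) (rtv ((hpar v h).choose)) ≤ q.length := by
      rw [hrtw]; exact SimpleGraph.dist_le q
    omega
  have hfacy : Acyclic f := by
    intro v
    suffices H : ∀ m v, G.dist v (rtv v) = m → ∃ m', iterO f m' (some v) = none from
      H _ v rfl
    intro m
    induction m using Nat.strong_induction_on with
    | _ m ih =>
      intro v hn
      by_cases h : v = rtv v
      · refine ⟨1, ?_⟩
        rw [iterO_succ]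
        simp only [Option.bind_some]
        rw [hf_none v h]
        simp
      · obtain ⟨-, hrtw, hlt⟩ := hstep v h
        obtain ⟨m', hm'⟩ := ih _ (hn ▸ hlt) _ rfl
        refine ⟨m' + 1, ?_⟩
        rw [iterO_succ]
        simp only [Option.bind_some]
        rw [hf_some v h]
        exact hm'
  refine ⟨f, hfacy, ?_, ?_⟩
  · ext a b
    rw [graphOf_adj]
    constructor
    · rintro ⟨hne, h | h⟩
      · by_cases ha : a = rtv a
        · rw [hf_none a ha] at h; simp at h
        · rw [hf_some a ha] at h
          exact (Option.some_injective _ h) ▸ (hstep a ha).1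
      · by_cases hb : b = rtv b
        · rw [hf_none b hb] at h; simp at h
        · rw [hf_some b hb] at h
          exact ((Option.some_injective _ h) ▸ (hstep b hb).1).symm
    · intro hab
      have hne : a ≠ b := hab.ne
      have hmk : G.connectedComponentMk a = G.connectedComponentMk b :=
        SimpleGraph.ConnectedComponent.connectedComponentMk_eq_of_adj hab
      have hrtab : rtv a = rtv b := congrArg rt hmk
      refine ⟨hne, ?_⟩
      by_cases hb : b = rtv b
      · -- b is the root of the common component; f a = some b
        left
        have ha : a ≠ rtv a := by rw [hrtab, ← hb]; exact hne
        have hpa : (SimpleGraph.Walk.cons hab SimpleGraph.Walk.nil).IsPath :=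
          SimpleGraph.Walk.IsPath.nil.cons (by simpa using hne)
        have := hsnd a b (by rw [hrtab, ← hb]) (SimpleGraph.Walk.cons hab SimpleGraph.Walk.nil)
          hpa ha
        rw [this]
        simp [SimpleGraph.Walk.getVert_cons_succ, SimpleGraph.Walk.getVert_zero]
      · by_cases ha : a = rtv a
        · -- a is the root; f b = some a
          right
          have hb' : b ≠ rtv b := hb
          have hpb : (SimpleGraph.Walk.cons hab.symm SimpleGraph.Walk.nil).IsPath :=
            SimpleGraph.Walk.IsPath.nil.cons (by simpa using hne.symm)
          have := hsnd b a (by rw [← hrtab, ← ha]) (SimpleGraph.Walk.cons hab.symm SimpleGraph.Walk.nil)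
            hpb hb'
          rw [this]
          simp [SimpleGraph.Walk.getVert_cons_succ, SimpleGraph.Walk.getVert_zero]
        · -- neither is a root
          obtain ⟨hadjb, qb, hqb, hnotb⟩ := (hpar b hb).choose_spec
          set Pb := SimpleGraph.Walk.cons hadjb qb with hPbdef
          have hPb : Pb.IsPath := by
            rw [hPbdef, SimpleGraph.Walk.cons_isPath_iff]; exact ⟨hqb, hnotb⟩
          by_cases hmem : a ∈ Pb.support
          · right
            -- the path from b to its root starts with the edge to a
            have hQ : (Pb.takeUntil a hmem).IsPath := hPb.takeUntil hmem
            have hQ' : (SimpleGraph.Walk.cons hab.symm SimpleGraph.Walk.nil :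
                G.Walk b a).IsPath :=
              SimpleGraph.Walk.IsPath.nil.cons (by simpa using hne.symm)
            have huniq := hGa.path_unique ⟨Pb.takeUntil a hmem, hQ⟩
              ⟨SimpleGraph.Walk.cons hab.symm SimpleGraph.Walk.nil, hQ'⟩
            have hval : Pb.takeUntil a hmem
                = SimpleGraph.Walk.cons hab.symm SimpleGraph.Walk.nil :=
              congrArg Subtype.val huniq
            have hspec := SimpleGraph.Walk.take_spec Pb hmem
            rw [hval] at hspec
            have hPb' : (SimpleGraph.Walk.cons hab.symm (Pb.dropUntil a hmem)).IsPath := by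
              have : (SimpleGraph.Walk.cons hab.symm SimpleGraph.Walk.nil).append
                  (Pb.dropUntil a hmem)
                  = SimpleGraph.Walk.cons hab.symm (Pb.dropUntil a hmem) := by
                rw [SimpleGraph.Walk.cons_append, SimpleGraph.Walk.nil_append]
              rw [← this, hspec]
              exact hPb
            have := hsnd b (rtv b) rfl (SimpleGraph.Walk.cons hab.symm (Pb.dropUntil a hmem))
              (by
                have : (SimpleGraph.Walk.cons hab.symm SimpleGraph.Walk.nil).append
                    (Pb.dropUntil a hmem)
                    = SimpleGraph.Walk.cons hab.symm (Pb.dropUntil a hmem) := by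
                  rw [SimpleGraph.Walk.cons_append, SimpleGraph.Walk.nil_append]
                rw [← this, hspec]; exact hPb) hb
            rw [this]
            rw [SimpleGraph.Walk.getVert_cons_succ, SimpleGraph.Walk.getVert_zero]
          · left
            have hPa : (SimpleGraph.Walk.cons hab Pb).IsPath := by
              rw [SimpleGraph.Walk.cons_isPath_iff]; exact ⟨hPb, hmem⟩
            have := hsnd a (rtv b) hrtab (SimpleGraph.Walk.cons hab Pb) hPa ha
            rw [this]
            rw [SimpleGraph.Walk.getVert_cons_succ, SimpleGraph.Walk.getVert_zero]
  · intro v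
    constructor
    · intro hv
      have h : v = rtv v := by
        by_contra h
        rw [hf_some v h] at hv
        simp at hv
      rw [h]
      exact hrtR _
    · intro hv
      exact hf_none v (hrt_uniq _ v hv rfl)

/-! ### Section 3: counting -/

open Function in
/-- the partial function encoded by a sequence of (vertex, parent) pairs. -/
noncomputable def fnOf {s : ℕ} (v p : Fin s → Fin n) : Fin n → Option (Fin n) :=
  fun x => if h : ∃ i, v i = x then some (p h.choose) else none

lemma fnOf_eq_some {s : ℕ} {v p : Fin s → Fin n} (hv : Function.Injective v) {i : Fin s}
    {x : Fin n} (h : v i = x) : fnOf v p x = some (p i) := by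
  have hex : ∃ j, v j = x := ⟨i, h⟩
  have : hex.choose = i := hv (by rw [hex.choose_spec, h])
  rw [fnOf, dif_pos hex, this]

lemma fnOf_eq_none {s : ℕ} {v p : Fin s → Fin n} {x : Fin n} (h : ∀ i, v i ≠ x) :
    fnOf v p x = none := by
  rw [fnOf, dif_neg (by push_neg; exact fun i => h i)]

lemma fnOf_ne_none_iff {s : ℕ} {v p : Fin s → Fin n} {x : Fin n} :
    fnOf v p x ≠ none ↔ ∃ i, v i = x := by
  constructor
  · intro h
    by_contra hc
    push_neg at hc
    exact h (fnOf_eq_none hc)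
  · rintro ⟨i, hi⟩
    rw [fnOf, dif_pos ⟨i, hi⟩]
    simp

/-- sequences of `s` forest-building edge additions on `n` vertices -/
def SeqT (n s : ℕ) : Type :=
  {w : (Fin s → Fin n) × (Fin s → Fin n) //
    Function.Injective w.1 ∧ Acyclic (fnOf w.1 w.2)}

instance {s : ℕ} : Finite (SeqT n s) := Subtype.finite

lemma snoc_inj {s : ℕ} {v : Fin s → Fin n} (hv : Function.Injective v)
    {q : Fin n} (hq : ∀ i, v i ≠ q) :
    Function.Injective (Fin.snoc v q : Fin (s + 1) → Fin n) := by
  intro a b hab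
  rcases Fin.eq_castSucc_or_eq_last a with ⟨a', rfl⟩ | rfl <;>
    rcases Fin.eq_castSucc_or_eq_last b with ⟨b', rfl⟩ | rfl
  · simp only [Fin.snoc_castSucc] at hab
    rw [hv hab]
  · rw [Fin.snoc_castSucc, Fin.snoc_last] at hab; exact absurd hab (hq a')
  · rw [Fin.snoc_castSucc, Fin.snoc_last] at hab; exact absurd hab.symm (hq b')
  · rfl

lemma fnOf_snoc {s : ℕ} {v p : Fin s → Fin n} (hv : Function.Injective v)
    {q x : Fin n} (hq : ∀ i, v i ≠ q) :
    fnOf (Fin.snoc v q) (Fin.snoc p x) = Function.update (fnOf v p) q (some x) := by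
  have hsnoc_inj := snoc_inj hv hq
  funext y
  by_cases hy : y = q
  · subst hy
    rw [Function.update_self]
    have h1 : (Fin.snoc v y : Fin (s+1) → Fin n) (Fin.last s) = y := Fin.snoc_last _ _
    have h2 := fnOf_eq_some (p := Fin.snoc p x) hsnoc_inj h1
    rw [h2]
    congr 1
    exact Fin.snoc_last _ _
  · rw [Function.update_of_ne hy]
    by_cases hex : ∃ i, v i = y
    · obtain ⟨i, hi⟩ := hex
      have h1 : (Fin.snoc v q : Fin (s+1) → Fin n) (Fin.castSucc i) = y := by
        rw [Fin.snoc_castSucc]; exact hi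
      have h2 := fnOf_eq_some (p := Fin.snoc p x) hsnoc_inj h1
      rw [h2, Fin.snoc_castSucc, fnOf_eq_some hv hi]
    · push_neg at hex
      rw [fnOf_eq_none hex, fnOf_eq_none (by
        intro i
        rcases Fin.eq_castSucc_or_eq_last i with ⟨i', rfl⟩ | rfl
        · rw [Fin.snoc_castSucc]; exact hex i'
        · rw [Fin.snoc_last]; exact fun hh => hy hh.symm)]

/-- the initial segment of a valid edge sequence -/
lemma init_mem_seqT {s : ℕ} (u : SeqT n (s + 1)) :
    Function.Injective (Fin.init u.1.1) ∧ Acyclic (fnOf (Fin.init u.1.1) (Fin.init u.1.2)) := by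
  obtain ⟨⟨v, p⟩, hinj, hacy⟩ := u
  constructor
  · intro a b hab
    exact Fin.castSucc_injective _ (hinj hab)
  · refine acyclic_of_le hacy ?_
    intro x
    by_cases hx : ∃ i : Fin s, Fin.init v i = x
    · right
      obtain ⟨i, hi⟩ := hx
      have h1 : fnOf (Fin.init v) (Fin.init p) x = some (Fin.init p i) :=
        fnOf_eq_some (fun a b hab => Fin.castSucc_injective _ (hinj hab)) hi
      have h2 : fnOf v p x = some (p (Fin.castSucc i)) := fnOf_eq_some hinj hi
      rw [h1, h2]
      rfl
    · left
      push_neg at hx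
      exact fnOf_eq_none hx

/-- possible extensions of a valid edge sequence -/
def Fib (n s : ℕ) (w : SeqT n s) : Type :=
  {qx : Fin n × Fin n // (∀ i, w.1.1 i ≠ qx.1) ∧
    Acyclic (Function.update (fnOf w.1.1 w.1.2) qx.1 (some qx.2))}

instance {s : ℕ} {w : SeqT n s} : Finite (Fib n s w) := Subtype.finite

/-- appending a valid extension to a valid sequence -/
noncomputable def seqTSnoc {s : ℕ} (w : SeqT n s) (qx : Fib n s w) : SeqT n (s + 1) :=
  ⟨(Fin.snoc w.1.1 qx.1.1, Fin.snoc w.1.2 qx.1.2),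
    snoc_inj w.2.1 qx.2.1,
    by rw [fnOf_snoc w.2.1 qx.2.1]; exact qx.2.2⟩

lemma seqTSnoc_bijective {s : ℕ} :
    Function.Bijective (fun wq : Σ w : SeqT n s, Fib n s w => seqTSnoc wq.1 wq.2) := by
  constructor
  · rintro ⟨w, qx⟩ ⟨w', qx'⟩ h
    have hval := Subtype.ext_iff.mp h
    simp only [seqTSnoc] at hval
    have hA := congrArg Prod.fst hval
    have hB := congrArg Prod.snd hval
    simp only at hA hB
    have h1 : w.1.1 = w'.1.1 := by
      have := congrArg Fin.init hA
      rwa [Fin.init_snoc, Fin.init_snoc] at this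
    have h2 : w.1.2 = w'.1.2 := by
      have := congrArg Fin.init hB
      rwa [Fin.init_snoc, Fin.init_snoc] at this
    have hw : w = w' := Subtype.ext (Prod.ext h1 h2)
    subst hw
    have hq1 : qx.1.1 = qx'.1.1 := by
      have := congrFun hA (Fin.last s)
      rwa [Fin.snoc_last, Fin.snoc_last] at this
    have hq2 : qx.1.2 = qx'.1.2 := by
      have := congrFun hB (Fin.last s)
      rwa [Fin.snoc_last, Fin.snoc_last] at this
    rw [Sigma.mk.inj_iff]
    exact ⟨rfl, heq_of_eq (Subtype.ext (Prod.ext hq1 hq2))⟩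
  · intro u
    have hinj := (init_mem_seqT u).1
    have hne : ∀ i, Fin.init u.1.1 i ≠ u.1.1 (Fin.last s) := by
      intro i h
      exact absurd (u.2.1 h) (Fin.ne_last_of_lt (Fin.castSucc_lt_last i))
    refine ⟨⟨⟨(Fin.init u.1.1, Fin.init u.1.2), (init_mem_seqT u).1, (init_mem_seqT u).2⟩,
      ⟨(u.1.1 (Fin.last s), u.1.2 (Fin.last s)), hne, ?_⟩⟩, ?_⟩
    · rw [← fnOf_snoc hinj hne, Fin.snoc_init_self, Fin.snoc_init_self]
      exact u.2.2
    · apply Subtype.ext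
      show (Fin.snoc (Fin.init u.1.1) (u.1.1 (Fin.last s)),
        Fin.snoc (Fin.init u.1.2) (u.1.2 (Fin.last s))) = u.1
      rw [Fin.snoc_init_self, Fin.snoc_init_self]

lemma nat_card_sigma_const {ι : Type*} [Finite ι] (α : ι → Type*) [∀ i, Finite (α i)]
    (c : ℕ) (h : ∀ i, Nat.card (α i) = c) : Nat.card (Σ i, α i) = Nat.card ι * c := by
  classical
  cases nonempty_fintype ι
  letI : ∀ i, Fintype (α i) := fun i => Fintype.ofFinite (α i)
  rw [Nat.card_eq_fintype_card, Fintype.card_sigma]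
  have : ∀ i : ι, Fintype.card (α i) = c := by
    intro i
    rw [← Nat.card_eq_fintype_card]
    exact h i
  rw [Finset.sum_congr rfl (fun i _ => this i), Finset.sum_const, Finset.card_univ,
    smul_eq_mul, Nat.card_eq_fintype_card]

lemma dom_card_fnOf {s : ℕ} {v p : Fin s → Fin n} (hv : Function.Injective v) :
    (Finset.univ.filter (fun x => fnOf v p x ≠ none)).card = s := by
  classical
  have himg : Finset.univ.filter (fun x => fnOf v p x ≠ none) = Finset.univ.image v := by
    ext x
    simp only [Finset.mem_filter, Finset.mem_univ, true_and, Finset.mem_image]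
    exact fnOf_ne_none_iff
  rw [himg, Finset.card_image_of_injective _ hv]
  simp

lemma roots_card_fnOf {s : ℕ} {v p : Fin s → Fin n} (hv : Function.Injective v) :
    (Finset.univ.filter (fun x => fnOf v p x = none)).card = n - s := by
  classical
  have hcard := dom_card_fnOf (p := p) hv
  have htot := Finset.card_filter_add_card_filter_not
    (s := (Finset.univ : Finset (Fin n))) (p := fun x => fnOf v p x = none)
  rw [Finset.card_univ, Fintype.card_fin] at htot
  simp only [ne_eq] at hcard
  omega

def prodSubtypeEquivSigma {α β : Type*} (P : α → β → Prop) :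
    {qx : α × β // P qx.1 qx.2} ≃ Σ x : β, {q : α // P q x} where
  toFun qx := ⟨qx.1.2, qx.1.1, qx.2⟩
  invFun xq := ⟨(xq.2.1, xq.1), xq.2.2⟩
  left_inv := by rintro ⟨⟨q, x⟩, h⟩; rfl
  right_inv := by rintro ⟨x, q, h⟩; rfl

lemma card_fib {s : ℕ} (w : SeqT n s) : Nat.card (Fib n s w) = n * (n - 1 - s) := by
  classical
  obtain ⟨⟨v, p⟩, hinj, hacy⟩ := w
  have hinj' : Function.Injective v := hinj
  have hacy' : Acyclic (fnOf v p) := hacy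
  have hpred : ∀ qx : Fin n × Fin n,
      ((∀ i, v i ≠ qx.1) ∧ Acyclic (Function.update (fnOf v p) qx.1 (some qx.2)))
        ↔ qx.1 ∈ (Finset.univ.filter (fun x => fnOf v p x = none)).erase
            (rootOf (fnOf v p) qx.2) := by
    rintro ⟨q, x⟩
    simp only [Finset.mem_erase, Finset.mem_filter, Finset.mem_univ, true_and]
    constructor
    · rintro ⟨hq, hac⟩
      have hnone : fnOf v p q = none := by
        by_contra hc
        obtain ⟨i, hi⟩ := fnOf_ne_none_iff.mp hc
        exact hq i hi
      refine ⟨?_, hnone⟩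
      intro heq
      exact not_acyclic_update hacy' hnone heq.symm hac
    · rintro ⟨hne, hnone⟩
      refine ⟨?_, acyclic_update hacy' hnone (fun h => hne h.symm)⟩
      intro i hi
      have : fnOf v p q ≠ none := fnOf_ne_none_iff.mpr ⟨i, hi⟩
      exact this hnone
  have e1 : Fib n s ⟨(v, p), hinj, hacy⟩ ≃
      {qx : Fin n × Fin n // qx.1 ∈ (Finset.univ.filter (fun x => fnOf v p x = none)).erase
        (rootOf (fnOf v p) qx.2)} := Equiv.subtypeEquivRight hpred
  have e2 := prodSubtypeEquivSigma
    (fun (q : Fin n) (x : Fin n) => q ∈ (Finset.univ.filter (fun y => fnOf v p y = none)).erase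
      (rootOf (fnOf v p) x))
  rw [Nat.card_congr (e1.trans e2)]
  rw [nat_card_sigma_const _ (n - 1 - s) (fun x => by
    rw [Nat.card_eq_finsetCard]
    rw [Finset.card_erase_of_mem (by
      simp only [Finset.mem_filter, Finset.mem_univ, true_and]
      exact root_parent_none hacy' x)]
    rw [roots_card_fnOf hinj']
    omega)]
  rw [Nat.card_eq_fintype_card, Fintype.card_fin]

instance seqTZeroUnique : Unique (SeqT n 0) where
  default :=
    ⟨(Fin.elim0, Fin.elim0), fun a => a.elim0, fun x => ⟨1, by
      rw [iterO_succ]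
      simp only [Option.bind_some]
      rw [fnOf_eq_none (fun i => i.elim0)]
      simp⟩⟩
  uniq := by
    rintro ⟨⟨v, p⟩, h⟩
    apply Subtype.ext
    apply Prod.ext <;> (funext i; exact i.elim0)

lemma card_seqT (s : ℕ) :
    Nat.card (SeqT n s) = ∏ i ∈ Finset.range s, (n * (n - 1 - i)) := by
  classical
  induction s with
  | zero => simp [Nat.card_unique]
  | succ s ih =>
    rw [Nat.card_congr (Equiv.ofBijective _ seqTSnoc_bijective).symm]
    rw [nat_card_sigma_const _ (n * (n - 1 - s)) (fun w => card_fib w), ih,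
      Finset.prod_range_succ, mul_comm (∏ i ∈ Finset.range s, (n * (n - 1 - i))) _]

/-- acyclic parent functions with exactly `s` non-roots -/
def PFs (n s : ℕ) : Type :=
  {f : Fin n → Option (Fin n) //
    Acyclic f ∧ (Finset.univ.filter (fun x => f x ≠ none)).card = s}

instance {s : ℕ} : Finite (PFs n s) := Subtype.finite

/-- enumerations of the non-roots of `f` -/
def Ord (s : ℕ) (f : Fin n → Option (Fin n)) : Type :=
  {g : Fin s → Fin n // Function.Injective g ∧ ∀ x, f x ≠ none ↔ ∃ i, g i = x}

instance {s : ℕ} {f : Fin n → Option (Fin n)} : Finite (Ord s f) := Subtype.finite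

lemma fnOf_recover {s : ℕ} {f : Fin n → Option (Fin n)} {g : Fin s → Fin n}
    (hg : Function.Injective g) (hiff : ∀ x, f x ≠ none ↔ ∃ i, g i = x)
    (p : Fin s → Fin n) (hp : ∀ i, f (g i) = some (p i)) :
    fnOf g p = f := by
  funext x
  by_cases hx : ∃ i, g i = x
  · obtain ⟨i, hi⟩ := hx
    rw [fnOf_eq_some hg hi, ← hi, hp i]
  · push_neg at hx
    rw [fnOf_eq_none hx]
    symm
    by_contra hfx
    obtain ⟨i, hi⟩ := (hiff x).mp hfx
    exact (hx i) hi

/-- assembling a sequence from a forest and an enumeration of its non-roots -/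
noncomputable def seqTOf {s : ℕ} (f : PFs n s) (g : Ord s f.1) : SeqT n s :=
  ⟨(g.1, fun i => (f.1 (g.1 i)).get
      (Option.ne_none_iff_isSome.mp ((g.2.2 (g.1 i)).mpr ⟨i, rfl⟩))),
    g.2.1, by
      rw [fnOf_recover g.2.1 g.2.2 _ (fun i => (Option.some_get _).symm)]
      exact f.2.1⟩

lemma seqTOf_bijective {s : ℕ} :
    Function.Bijective (fun fg : Σ f : PFs n s, Ord s f.1 => seqTOf fg.1 fg.2) := by
  constructor
  · rintro ⟨f, g⟩ ⟨f', g'⟩ h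
    have hval := Subtype.ext_iff.mp h
    simp only [seqTOf] at hval
    have hA : g.1 = g'.1 := congrArg Prod.fst hval
    have hf : f = f' := by
      apply Subtype.ext
      rw [← fnOf_recover g.2.1 g.2.2 _ (fun i => (Option.some_get _).symm),
        ← fnOf_recover g'.2.1 g'.2.2 _ (fun i => (Option.some_get _).symm)]
      have hB := congrArg Prod.snd hval
      simp only at hA hB
      rw [hB, hA]
      all_goals exact fun i => Option.ne_none_iff_isSome.mp ((g.2.2 (g.1 i)).mpr ⟨i, rfl⟩)
    subst hf
    rw [Sigma.mk.inj_iff]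
    exact ⟨rfl, heq_of_eq (Subtype.ext hA)⟩
  · rintro ⟨⟨v, p⟩, hinj, hacy⟩
    have hinj' : Function.Injective v := hinj
    have hacy' : Acyclic (fnOf v p) := hacy
    refine ⟨⟨⟨fnOf v p, hacy', by
        have := dom_card_fnOf (p := p) hinj'
        simpa using this⟩,
      ⟨v, hinj', fun x => fnOf_ne_none_iff⟩⟩, ?_⟩
    apply Subtype.ext
    simp only [seqTOf]
    refine Prod.ext rfl ?_
    funext i
    apply Option.some_injective
    rw [Option.some_get, fnOf_eq_some hinj' rfl]

lemma card_ord {s : ℕ} {f : Fin n → Option (Fin n)}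
    (hcard : (Finset.univ.filter (fun x => f x ≠ none)).card = s) :
    Nat.card (Ord s f) = s.factorial := by
  classical
  have e : Ord s f ≃ (Fin s ≃ {x : Fin n // f x ≠ none}) := {
    toFun := fun g => Equiv.ofBijective
      (fun i => (⟨g.1 i, (g.2.2 (g.1 i)).mpr ⟨i, rfl⟩⟩ : {x : Fin n // f x ≠ none}))
      ⟨fun a b hab => g.2.1 (congrArg Subtype.val hab), by
        rintro ⟨x, hx⟩
        obtain ⟨i, hi⟩ := (g.2.2 x).mp hx
        exact ⟨i, Subtype.ext hi⟩⟩
    invFun := fun e => ⟨fun i => (e i).1,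
      fun a b hab => e.injective (Subtype.ext hab),
      fun x => ⟨fun hx => ⟨e.symm ⟨x, hx⟩, congrArg Subtype.val (e.apply_symm_apply ⟨x, hx⟩)⟩,
        by rintro ⟨i, rfl⟩; exact (e i).2⟩⟩
    left_inv := fun g => Subtype.ext rfl
    right_inv := fun e => Equiv.ext (fun i => Subtype.ext rfl) }
  rw [Nat.card_congr e, Nat.card_eq_fintype_card]
  have hdom : Fintype.card {x : Fin n // f x ≠ none} = s := by
    rw [Fintype.card_subtype]
    exact hcard
  have e0 : Fin s ≃ {x : Fin n // f x ≠ none} := (Fintype.equivFinOfCardEq hdom).symm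
  rw [Fintype.card_equiv e0, Fintype.card_fin]

lemma card_pfs (s : ℕ) : Nat.card (PFs n s) = n ^ s * (n - 1).choose s := by
  classical
  have h1 : Nat.card (SeqT n s) = Nat.card (PFs n s) * s.factorial := by
    rw [Nat.card_congr (Equiv.ofBijective _ (seqTOf_bijective (n := n) (s := s))).symm]
    exact nat_card_sigma_const _ s.factorial (fun f => card_ord f.2.2)
  have h2 := card_seqT (n := n) s
  have hprod : ∏ i ∈ Finset.range s, (n * (n - 1 - i))
      = n ^ s * ((n - 1).descFactorial s) := by
    rw [Finset.prod_mul_distrib, Finset.prod_const, Finset.card_range,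
      Nat.descFactorial_eq_prod_range]
  rw [h1, hprod, Nat.descFactorial_eq_factorial_mul_choose] at h2
  apply Nat.eq_of_mul_eq_mul_right (Nat.factorial_pos s)
  rw [h2]
  ring

/-- `rootedForests` equals the count of acyclic parent functions with `k` roots. -/
lemma rootedForests_eq_card_pfk (n k : ℕ) :
    rootedForests n k = Nat.card {f : Fin n → Option (Fin n) //
      Acyclic f ∧ (Finset.univ.filter (fun x => f x = none)).card = k} := by
  classical
  rw [rootedForests]
  symm
  apply Nat.card_congr
  apply Equiv.ofBijective (f := fun f => (⟨(graphOf f.1, Finset.univ.filter (fun x => f.1 x = none)),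
    graphOf_acyclic f.2.1,
    fun c => (existsUnique_congr (fun v => and_congr_left' (by simp))).mpr
      (exists_unique_root f.2.1 c),
    f.2.2⟩ : {F : SimpleGraph (Fin n) × Finset (Fin n) //
      F.1.IsAcyclic ∧
      (∀ c : F.1.ConnectedComponent, ∃! v, v ∈ F.2 ∧ F.1.connectedComponentMk v = c) ∧
      F.2.card = k}))
  constructor
  · intro f f' h
    have hval := Subtype.ext_iff.mp h
    have hG : graphOf f.1 = graphOf f'.1 := congrArg Prod.fst hval
    have hR := congrArg Prod.snd hval
    simp only at hG hR
    apply Subtype.ext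
    apply parentFn_unique f.2.1 f'.2.1 hG
    intro v
    have := Finset.ext_iff.mp hR v
    simpa using this
  · rintro ⟨⟨G, R⟩, hGa, hGr, hcard⟩
    obtain ⟨f, hfa, hfG, hfR⟩ := exists_parentFn hGa hGr
    have hfilt : Finset.univ.filter (fun x => f x = none) = R := by
      ext x
      simp [hfR x]
    refine ⟨⟨f, hfa, by rw [hfilt]; exact hcard⟩, ?_⟩
    apply Subtype.ext
    simp only
    rw [hfilt, hfG]

/-- The count of rooted forests on `n` vertices with `k` trees. -/
theorem rootedForests_formula {n k : ℕ} (hkn : k ≤ n) :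
    rootedForests n k = n ^ (n - k) * (n - 1).choose (n - k) := by
  classical
  rw [rootedForests_eq_card_pfk]
  rw [← card_pfs (n := n) (n - k)]
  apply Nat.card_congr
  apply Equiv.subtypeEquivRight
  intro f
  have htot := Finset.card_filter_add_card_filter_not
    (s := (Finset.univ : Finset (Fin n))) (p := fun x => f x = none)
  rw [Finset.card_univ, Fintype.card_fin] at htot
  constructor
  · rintro ⟨hf, hc⟩
    refine ⟨hf, ?_⟩
    simp only [ne_eq]
    omega
  · rintro ⟨hf, hc⟩
    refine ⟨hf, ?_⟩
    simp only [ne_eq] at hc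
    omega

end RF

/-- `∑_{k=0}^{n} t_{n,k} · x^k = x(x+n)^{n-1}` as polynomials in `x`
(with the convention that for `n = 0` the sum equals `1`). -/
theorem stmt_5 (n : ℕ) :
    ∑ k ∈ Finset.range (n + 1), (rootedForests n k : Polynomial ℚ) * X ^ k
      = if n = 0 then 1 else X * (X + C (n : ℚ)) ^ (n - 1) := by
  have hform : ∀ k ∈ Finset.range (n + 1), (rootedForests n k : Polynomial ℚ) * X ^ k
      = (n : Polynomial ℚ) ^ (n - k) * ((n - 1).choose (n - k) : Polynomial ℚ) * X ^ k := by
    intro k hk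
    rw [RF.rootedForests_formula (Nat.lt_succ_iff.mp (Finset.mem_range.mp hk))]
    push_cast
    ring
  rw [Finset.sum_congr rfl hform]
  rcases Nat.eq_zero_or_pos n with rfl | hn
  · simp
  rw [if_neg hn.ne']
  rw [Finset.sum_range_succ']
  have h0 : ((n - 1).choose (n - 0) : Polynomial ℚ) = 0 := by
    rw [Nat.choose_eq_zero_of_lt (by omega)]
    simp
  rw [h0, mul_zero, zero_mul, add_zero]
  have hpow : n - 1 + 1 = n := by omega
  rw [add_pow, hpow, Finset.mul_sum]
  apply Finset.sum_congr rfl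
  intro i hi
  have hi' : i ≤ n - 1 := by
    have := Finset.mem_range.mp hi
    omega
  have h1 : n - (i + 1) = n - 1 - i := by omega
  have h2 : (n - 1).choose (n - 1 - i) = (n - 1).choose i := Nat.choose_symm hi'
  rw [h1, h2]
  have h3 : (C (n : ℚ) : Polynomial ℚ) = (n : Polynomial ℚ) := by
    simp
  rw [h3]
  ring
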